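/- If ℐ is a superequivalence on a set S, then Z(ℐ) = the ideal of filters of relations generated by the principal filters Fg{J} for J ∈ ℐ is a superuniformity on S; moreover the mapping ℐ ↦ Z(ℐ) preserves binary meets and arbitrary joins of superequivalences. -/

import Mathlib

open Filter Set

variable {α : Type*}

/-- The identity relation (Mathlib's former `idRel`, removed upstream). -/
def idRel {α : Type*} :=
  { p : α × α | p.1 = p.2 }

/-- Composition of relations (Mathlib's former `compRel`, removed upstream). -/
def compRel {α : Type*} (r₁ r₂ : Set (α × α)) :=
  { p : α × α | ∃ z : α, (p.1, z) ∈ r₁ ∧ (z, p.2) ∈ r₂ }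

/-- Composition of filters of relations: the filter generated by compositions
of members. -/
def fComp (F G : Filter (α × α)) : Filter (α × α) :=
  F.lift fun U => G.lift' fun V => compRel U V

/-- An ideal in the lattice of filters of relations (filters carry the
reverse-inclusion order, which is Mathlib's order on `Filter`): nonempty,
downward closed, and closed under finite joins. -/
def IsFilIdeal (ℰ : Set (Filter (α × α))) : Prop :=
  ℰ.Nonempty ∧ (∀ F ∈ ℰ, ∀ G ≤ F, G ∈ ℰ) ∧ (∀ F ∈ ℰ, ∀ G ∈ ℰ, F ⊔ G ∈ ℰ)

/-- A superuniformity: an ideal of filters of relations containing the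
principal filter on the diagonal, closed under opposites of filters, and
closed under composition of filters. -/
def IsSuperUnif (ℰ : Set (Filter (α × α))) : Prop :=
  IsFilIdeal ℰ ∧ 𝓟 idRel ∈ ℰ ∧ (∀ F ∈ ℰ, Filter.map Prod.swap F ∈ ℰ) ∧
    (∀ F ∈ ℰ, ∀ G ∈ ℰ, fComp F G ∈ ℰ)

/-- Composition of ideals of filters: the ideal generated by the filter
compositions of members (a directed family, hence the downward closure). -/
def filIdealComp (ℰ ℰ' : Set (Filter (α × α))) : Set (Filter (α × α)) :=
  {H | ∃ F ∈ ℰ, ∃ G ∈ ℰ', H ≤ fComp F G}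

/-- Composition of a nonempty list of filters of relations. -/
def filListComp : List (Filter (α × α)) → Filter (α × α)
  | [] => 𝓟 idRel
  | [F] => F
  | F :: G :: l => fComp F (filListComp (G :: l))

/-- The set of finite (nonempty) compositions of filters from `X`. -/
def filComps (X : Set (Filter (α × α))) : Set (Filter (α × α)) :=
  {H | ∃ l : List (Filter (α × α)), l ≠ [] ∧ (∀ F ∈ l, F ∈ X) ∧ H = filListComp l}

/-- The ideal of filters generated by a set `G` of filters: everything below a
finite join of members. -/
def filIdealGen (G : Set (Filter (α × α))) : Set (Filter (α × α)) :=
  {H | ∃ s : Finset (Filter (α × α)), ↑s ⊆ G ∧ H ≤ s.sup id}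

/-- The join of two superuniformities: the ideal generated by all finite
compositions of filters from their union. -/
def suJoin (ℰ ℰ' : Set (Filter (α × α))) : Set (Filter (α × α)) :=
  filIdealGen (filComps (ℰ ∪ ℰ'))

/-- The join of a family of superuniformities. -/
def suSup (S : Set (Set (Filter (α × α)))) : Set (Filter (α × α)) :=
  filIdealGen (filComps (⋃₀ S))

/-- An ideal in the lattice of binary relations on a set: nonempty, downward
closed, and closed under finite unions (= finite joins). -/
def IsIdeal (ℐ : Set (Set (α × α))) : Prop :=
  ℐ.Nonempty ∧ (∀ R ∈ ℐ, ∀ T ⊆ R, T ∈ ℐ) ∧ (∀ R ∈ ℐ, ∀ S ∈ ℐ, R ∪ S ∈ ℐ)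

/-- A superequivalence: an ideal of relations containing the diagonal, closed
under relational opposites, and closed under composition of relations. -/
def IsSuperEq (ℐ : Set (Set (α × α))) : Prop :=
  IsIdeal ℐ ∧ idRel ∈ ℐ ∧ (∀ R ∈ ℐ, Prod.swap ⁻¹' R ∈ ℐ) ∧
    (∀ R ∈ ℐ, ∀ S ∈ ℐ, compRel R S ∈ ℐ)

/-- Composition of ideals of relations: the ideal generated by the compositions
`R ○ S` of members (this generating family is directed, so the generated ideal
is its downward closure). -/
def idealComp (ℐ 𝒥 : Set (Set (α × α))) : Set (Set (α × α)) :=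
  {T | ∃ R ∈ ℐ, ∃ S ∈ 𝒥, T ⊆ compRel R S}

/-- Composition of a nonempty list of relations. -/
def listComp : List (Set (α × α)) → Set (α × α)
  | [] => idRel
  | [R] => R
  | R :: S :: l => compRel R (listComp (S :: l))

/-- The ideal of relations generated by a set `G` of relations: everything
below a finite union of members of `G`. -/
def idealGen (G : Set (Set (α × α))) : Set (Set (α × α)) :=
  {T | ∃ s : Finset (Set (α × α)), ↑s ⊆ G ∧ T ⊆ ⋃₀ ↑s}

/-- The set of finite (nonempty) compositions of relations from `X`. -/
def comps (X : Set (Set (α × α))) : Set (Set (α × α)) :=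
  {T | ∃ l : List (Set (α × α)), l ≠ [] ∧ (∀ R ∈ l, R ∈ X) ∧ T = listComp l}

/-- The join of two superequivalences: the ideal generated by all finite
compositions of relations from their union. -/
def seJoin (ℐ 𝒥 : Set (Set (α × α))) : Set (Set (α × α)) :=
  idealGen (comps (ℐ ∪ 𝒥))

/-- The join of a family of superequivalences. -/
def seSup (S : Set (Set (Set (α × α)))) : Set (Set (α × α)) :=
  idealGen (comps (⋃₀ S))

/-- `Z(ℐ)`: the ideal of filters of relations generated by the principal
filters `𝓟 J` for `J ∈ ℐ` (a directed family, hence the downward closure). -/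
def Zmap (ℐ : Set (Set (α × α))) : Set (Filter (α × α)) :=
  {H | ∃ J ∈ ℐ, H ≤ 𝓟 J}

lemma fComp_mono {F F' G G' : Filter (α × α)} (hF : F ≤ F') (hG : G ≤ G') :
    fComp F G ≤ fComp F' G' :=
  Filter.lift_mono hF fun _ => Filter.lift'_mono hG le_rfl

lemma fComp_principal (U V : Set (α × α)) :
    fComp (𝓟 U) (𝓟 V) = 𝓟 (compRel U V) := by
  have h1 : ∀ U' : Set (α × α), (𝓟 V).lift' (fun V' => compRel U' V') = 𝓟 (compRel U' V) :=
    fun U' => Filter.lift'_principal (fun x y h => by rintro p ⟨z, h1, h2⟩; exact ⟨z, h1, h h2⟩)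
  simp only [fComp, h1]
  exact Filter.lift_principal
    (fun x y h => Filter.principal_mono.2 (by rintro p ⟨z, h1, h2⟩; exact ⟨z, h h1, h2⟩))

lemma filListComp_map_principal :
    ∀ l : List (Set (α × α)), filListComp (l.map 𝓟) = 𝓟 (listComp l)
  | [] => rfl
  | [R] => rfl
  | R :: S :: l => by
    show fComp (𝓟 R) (filListComp ((S :: l).map 𝓟)) = _
    rw [filListComp_map_principal (S :: l), fComp_principal]
    rfl

lemma filListComp_le_principal (h : Filter (α × α) → Set (α × α)) :
    ∀ l : List (Filter (α × α)), (∀ G ∈ l, G ≤ 𝓟 (h G)) →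
      filListComp l ≤ 𝓟 (listComp (l.map h))
  | [], _ => le_rfl
  | [F], hl => hl F (List.mem_singleton_self F)
  | F :: G :: l, hl => by
    show fComp F (filListComp (G :: l)) ≤ 𝓟 (compRel (h F) (listComp ((G :: l).map h)))
    calc fComp F (filListComp (G :: l))
        ≤ fComp (𝓟 (h F)) (𝓟 (listComp ((G :: l).map h))) :=
          fComp_mono (hl F (List.mem_cons_self))
            (filListComp_le_principal h (G :: l)
              (fun G' hG' => hl G' (List.mem_cons_of_mem _ hG')))
      _ = 𝓟 (compRel (h F) (listComp ((G :: l).map h))) := fComp_principal _ _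

lemma finset_sup_principal (s : Finset (Set (α × α))) :
    s.sup 𝓟 = 𝓟 (⋃₀ ↑s) := by
  classical
  induction s using Finset.induction_on with
  | empty => simp
  | insert _ _ h ih =>
    rw [Finset.sup_insert, ih]
    simp [Filter.sup_principal, Set.sUnion_insert]

theorem stmt18 (ℐ : Set (Set (α × α))) (hI : IsSuperEq ℐ) :
    IsSuperUnif (Zmap ℐ) ∧
      (∀ 𝒥 : Set (Set (α × α)), IsSuperEq 𝒥 →
        Zmap (ℐ ∩ 𝒥) = Zmap ℐ ∩ Zmap 𝒥) ∧
      (∀ S : Set (Set (Set (α × α))), (∀ ℐ' ∈ S, IsSuperEq ℐ') →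
        Zmap (seSup S) = suSup (Zmap '' S)) := by
  classical
  obtain ⟨⟨⟨R0, hR0⟩, hdown, hsup⟩, hid, hswap, hcomp⟩ := hI
  refine ⟨⟨⟨⟨𝓟 R0, R0, hR0, le_rfl⟩, ?_, ?_⟩, ⟨idRel, hid, le_rfl⟩, ?_, ?_⟩, ?_, ?_⟩
  · rintro F ⟨J, hJ, hF⟩ G hG
    exact ⟨J, hJ, hG.trans hF⟩
  · rintro F ⟨J, hJ, hF⟩ G ⟨K, hK, hG⟩
    refine ⟨J ∪ K, hsup J hJ K hK, sup_le (hF.trans ?_) (hG.trans ?_)⟩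
    · exact Filter.principal_mono.2 Set.subset_union_left
    · exact Filter.principal_mono.2 Set.subset_union_right
  · rintro F ⟨J, hJ, hF⟩
    refine ⟨Prod.swap ⁻¹' J, hswap J hJ, ?_⟩
    calc Filter.map Prod.swap F ≤ Filter.map Prod.swap (𝓟 J) := Filter.map_mono hF
      _ = 𝓟 (Prod.swap '' J) := Filter.map_principal
      _ = 𝓟 (Prod.swap ⁻¹' J) := by rw [Set.image_swap_eq_preimage_swap]
  · rintro F ⟨J, hJ, hF⟩ G ⟨K, hK, hG⟩
    exact ⟨compRel J K, hcomp J hJ K hK,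
      (fComp_mono hF hG).trans_eq (fComp_principal J K)⟩
  · intro 𝒥 hJ
    obtain ⟨⟨_, hJdown, _⟩, _, _, _⟩ := hJ
    ext H
    constructor
    · rintro ⟨J, ⟨hJ1, hJ2⟩, hH⟩
      exact ⟨⟨J, hJ1, hH⟩, ⟨J, hJ2, hH⟩⟩
    · rintro ⟨⟨J, hJ1, hH1⟩, ⟨K, hK1, hH2⟩⟩
      refine ⟨J ∩ K, ⟨hdown J hJ1 _ Set.inter_subset_left,
        hJdown K hK1 _ Set.inter_subset_right⟩, ?_⟩
      rw [← Filter.inf_principal]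
      exact le_inf hH1 hH2
  · intro S _
    ext H
    constructor
    · -- Zmap (seSup S) ⊆ suSup (Zmap '' S)
      rintro ⟨J, ⟨s, hs, hJs⟩, hH⟩
      refine ⟨s.image 𝓟, ?_, ?_⟩
      · rintro F hF
        simp only [Finset.coe_image, Set.mem_image] at hF
        obtain ⟨T, hT, rfl⟩ := hF
        obtain ⟨l, hl, hlmem, rfl⟩ := hs hT
        refine ⟨l.map 𝓟, by simpa using hl, ?_, (filListComp_map_principal l).symm⟩
        rintro F hF
        obtain ⟨R, hR, rfl⟩ := List.mem_map.1 hF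
        obtain ⟨ℐ', hℐ', hRℐ'⟩ := hlmem R hR
        exact ⟨Zmap ℐ', ⟨ℐ', hℐ', rfl⟩, R, hRℐ', le_rfl⟩
      · calc H ≤ 𝓟 J := hH
          _ ≤ 𝓟 (⋃₀ ↑s) := Filter.principal_mono.2 hJs
          _ = s.sup 𝓟 := (finset_sup_principal s).symm
          _ = (s.image 𝓟).sup id := (Finset.sup_image s 𝓟 id).symm
    · -- suSup (Zmap '' S) ⊆ Zmap (seSup S)
      rintro ⟨t, ht, hHt⟩
      set h : Filter (α × α) → Set (α × α) := fun G =>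
        if hg : ∃ R ∈ ⋃₀ S, G ≤ 𝓟 R then hg.choose else ∅ with hhdef
      have hh : ∀ G ∈ ⋃₀ (Zmap '' S), h G ∈ ⋃₀ S ∧ G ≤ 𝓟 (h G) := by
        rintro G ⟨_, ⟨ℐ', hℐ', rfl⟩, R, hR, hG⟩
        have hg : ∃ R ∈ ⋃₀ S, G ≤ 𝓟 R := ⟨R, ⟨ℐ', hℐ', hR⟩, hG⟩
        simp only [hhdef, dif_pos hg]
        exact ⟨hg.choose_spec.1, hg.choose_spec.2⟩
      set g : Filter (α × α) → Set (α × α) := fun F =>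
        if hf : ∃ T ∈ comps (⋃₀ S), F ≤ 𝓟 T then hf.choose else ∅ with hgdef
      have hg : ∀ F ∈ t, g F ∈ comps (⋃₀ S) ∧ F ≤ 𝓟 (g F) := by
        intro F hF
        obtain ⟨l, hl, hlmem, rfl⟩ := ht hF
        have hf : ∃ T ∈ comps (⋃₀ S), filListComp l ≤ 𝓟 T := by
          refine ⟨listComp (l.map h), ⟨l.map h, by simpa using hl, ?_, rfl⟩,
            filListComp_le_principal h l (fun G hG => (hh G (hlmem G hG)).2)⟩
          rintro R hR
          obtain ⟨G, hG, rfl⟩ := List.mem_map.1 hR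
          exact (hh G (hlmem G hG)).1
        simp only [hgdef, dif_pos hf]
        exact ⟨hf.choose_spec.1, hf.choose_spec.2⟩
      refine ⟨⋃₀ ↑(t.image g), ⟨t.image g, ?_, subset_rfl⟩, ?_⟩
      · rintro T hT
        simp only [Finset.coe_image, Set.mem_image] at hT
        obtain ⟨F, hF, rfl⟩ := hT
        exact (hg F hF).1
      · refine hHt.trans (Finset.sup_le fun F hF => ?_)
        calc (id F : Filter (α × α)) ≤ 𝓟 (g F) := (hg F hF).2
          _ ≤ 𝓟 (⋃₀ ↑(t.image g)) := Filter.principal_mono.2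
              (Set.subset_sUnion_of_mem
                (Finset.mem_coe.2 (Finset.mem_image_of_mem g hF)))
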